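/- In the layered graph G obtained from a finite directed graph D on n vertices, every path from (s,0) to (t,n-1) has length congruent to n-1 modulo 2. Consequently, if there is no directed path from s to t in D, then every path in G from (s,0) to (t,n-1) (if any exists) has length at least n+1, so the distance differs from n-1 by at least 2. -/

import Mathlib

private lemma layered_aux {n : ℕ} (D : Fin n → Fin n → Prop) :
    ∀ {x y : Fin n × Fin n}
      (p : (SimpleGraph.fromRel fun p q : Fin n × Fin n =>
        D p.1 q.1 ∧ (q.2 : ℕ) = (p.2 : ℕ) + 1).Walk x y),
      ((y.2 : ℤ) - (x.2 : ℤ) ≤ p.length) ∧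
      ((p.length : ℤ) - ((y.2 : ℤ) - (x.2 : ℤ))) % 2 = 0 ∧
      ((p.length : ℤ) = (y.2 : ℤ) - (x.2 : ℤ) → Relation.ReflTransGen D x.1 y.1) := by
  intro x y p
  induction p with
  | nil => exact ⟨by simp, by simp, fun _ => Relation.ReflTransGen.refl⟩
  | @cons a b c h q ih =>
    obtain ⟨hne, hor⟩ := h
    obtain ⟨h1, h2, h3⟩ := ih
    rcases hor with ⟨hD, hstep⟩ | ⟨hD, hstep⟩
    · have hz : (b.2 : ℤ) = (a.2 : ℤ) + 1 := by exact_mod_cast hstep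
      refine ⟨?_, ?_, ?_⟩
      · erw [SimpleGraph.Walk.length_cons]; push_cast; omega
      · erw [SimpleGraph.Walk.length_cons]; push_cast; omega
      · intro he
        erw [SimpleGraph.Walk.length_cons] at he
        push_cast at he
        have : (q.length : ℤ) = (c.2 : ℤ) - (b.2 : ℤ) := by omega
        exact Relation.ReflTransGen.head hD (h3 this)
    · have hz : (a.2 : ℤ) = (b.2 : ℤ) + 1 := by exact_mod_cast hstep
      refine ⟨?_, ?_, ?_⟩
      · erw [SimpleGraph.Walk.length_cons]; push_cast; omega
      · erw [SimpleGraph.Walk.length_cons]; push_cast; omega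
      · intro he
        erw [SimpleGraph.Walk.length_cons] at he
        push_cast at he
        omega

/-- In the layered graph of a directed graph `D` on `Fin n` (with self-loops at
every vertex), every walk from `(s,0)` to `(t,n-1)` has length congruent to
`n-1` mod 2, and if there is no directed path from `s` to `t` then every such
walk has length at least `n+1`. -/
theorem layered_graph_walk_parity (n : ℕ) (hn : 0 < n) (D : Fin n → Fin n → Prop)
    (hloop : ∀ u, D u u) (s t : Fin n)
    (p : (SimpleGraph.fromRel fun p q : Fin n × Fin n =>
        D p.1 q.1 ∧ (q.2 : ℕ) = (p.2 : ℕ) + 1).Walk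
        (s, ⟨0, hn⟩) (t, ⟨n - 1, Nat.sub_lt hn one_pos⟩)) :
    p.length % 2 = (n - 1) % 2 ∧
    (¬ Relation.ReflTransGen D s t → n + 1 ≤ p.length) := by
  obtain ⟨h1, h2, h3⟩ := layered_aux D p
  simp only [Fin.val_mk] at h1 h2 h3
  have hcast : ((n - 1 : ℕ) : ℤ) = (n : ℤ) - 1 := by omega
  constructor
  · omega
  · intro hnot
    by_contra hlt
    apply hnot
    have : (p.length : ℤ) = ((n - 1 : ℕ) : ℤ) - (0 : ℤ) := by omega
    exact h3 (by simpa using this)
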